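/- Let G be a group acting on a vector space V, J the augmentation ideal of C[G], and suppose f ∈ V satisfies f·δ = 0 for all δ ∈ J^{s+1}. Let γ ∈ G with γ^e = 1 for some integer e ≥ 1. Then for any δ₁ ∈ J^m and δ₂ ∈ J^{s−m−1}, we have f·(δ₁(γ − 1)δ₂) = 0. -/

import Mathlib

/-- The augmentation ideal of `ℂ[G]`. -/
noncomputable def augIdeal (G : Type*) [Group G] : Ideal (MonoidAlgebra ℂ G) :=
  RingHom.ker ((MonoidAlgebra.lift ℂ ℂ G (1 : G →* ℂ)) :
    MonoidAlgebra ℂ G →ₐ[ℂ] ℂ).toRingHom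

lemma of_sub_one_mem_augIdeal {G : Type*} [Group G] (g : G) :
    MonoidAlgebra.of ℂ G g - 1 ∈ augIdeal G := by
  simp [augIdeal, RingHom.mem_ker, map_sub]

/-- The augmentation ideal is closed under right multiplication. -/
lemma augIdeal_mul_mem_right {G : Type*} [Group G] {y : MonoidAlgebra ℂ G}
    (hy : y ∈ augIdeal G) (r : MonoidAlgebra ℂ G) : y * r ∈ augIdeal G := by
  simp only [augIdeal, RingHom.mem_ker] at hy ⊢
  rw [map_mul, hy, zero_mul]

/-- Powers of the augmentation ideal are closed under right multiplication. -/
lemma augIdeal_pow_mul_mem_right {G : Type*} [Group G] (k : ℕ) {w : MonoidAlgebra ℂ G}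
    (hw : w ∈ augIdeal G ^ k) (r : MonoidAlgebra ℂ G) : w * r ∈ augIdeal G ^ k := by
  induction k generalizing w with
  | zero =>
    rw [Submodule.pow_zero, Submodule.one_eq_span]
    exact Submodule.mem_span_singleton.mpr ⟨w * r, by simp [smul_eq_mul]⟩
  | succ k ih =>
    rw [Submodule.pow_succ] at hw ⊢
    refine Submodule.mul_induction_on hw (fun x hx y hy => ?_) (fun a b ha hb => ?_)
    · rw [mul_assoc]
      exact Submodule.mul_mem_mul hx (augIdeal_mul_mem_right hy r)
    · rw [add_mul]; exact add_mem ha hb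

/-- Product of elements of powers of the augmentation ideal. -/
lemma augIdeal_mul_mem_pow_add {G : Type*} [Group G] (a b : ℕ) {u v : MonoidAlgebra ℂ G}
    (hu : u ∈ augIdeal G ^ a) (hv : v ∈ augIdeal G ^ b) : u * v ∈ augIdeal G ^ (a + b) := by
  induction b generalizing v with
  | zero => exact augIdeal_pow_mul_mem_right a hu v
  | succ b ih =>
    rw [Submodule.pow_succ] at hv
    rw [← Nat.add_assoc, Submodule.pow_succ]
    refine Submodule.mul_induction_on hv (fun y hy z hz => ?_) (fun c d hc hd => ?_)
    · rw [← mul_assoc]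
      exact Submodule.mul_mem_mul (ih hy) hz
    · rw [mul_add]; exact add_mem hc hd

/-- If `f` is annihilated by `J^{s+1}` and `γ ∈ G` is torsion (`γ^e = 1`, `e ≥ 1`),
then `f·(δ₁(γ − 1)δ₂) = 0` for all `δ₁ ∈ J^m`, `δ₂ ∈ J^{s−m−1}` (here `n = s−m−1`). -/
theorem higherOrder_elliptic_vanishing {G V : Type*} [Group G] [AddCommGroup V]
    [Module (MonoidAlgebra ℂ G) V] (s m n : ℕ) (hmn : m + n + 1 = s)
    (f : V) (hf : ∀ δ ∈ augIdeal G ^ (s + 1), δ • f = 0)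
    (γ : G) (e : ℕ) (he : 1 ≤ e) (hγ : γ ^ e = 1)
    (δ₁ δ₂ : MonoidAlgebra ℂ G) (hδ₁ : δ₁ ∈ augIdeal G ^ m) (hδ₂ : δ₂ ∈ augIdeal G ^ n) :
    (δ₁ * (MonoidAlgebra.of ℂ G γ - 1) * δ₂) • f = 0 := by
  set x : MonoidAlgebra ℂ G := MonoidAlgebra.of ℂ G γ with hxdef
  set g : MonoidAlgebra ℂ G := x - 1 with hgdef
  have hg : g ∈ augIdeal G ^ 1 := by
    rw [Submodule.pow_one]; exact of_sub_one_mem_augIdeal γ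
  -- each δ₁ * x^l * g * δ₂ acts on f like δ₁ * g * δ₂
  have key : ∀ l : ℕ, (δ₁ * (x ^ l * g) * δ₂) • f = (δ₁ * g * δ₂) • f := by
    intro l
    have hxl : x ^ l - 1 ∈ augIdeal G ^ 1 := by
      rw [Submodule.pow_one]
      have := of_sub_one_mem_augIdeal (G := G) (γ ^ l)
      simpa [hxdef, map_pow] using this
    have hmem : (δ₁ * ((x ^ l - 1) * (g * δ₂))) ∈ augIdeal G ^ (s + 1) := by
      have h1 : δ₁ * ((x ^ l - 1) * (g * δ₂)) ∈ augIdeal G ^ (m + (1 + (1 + n))) :=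
        augIdeal_mul_mem_pow_add _ _ hδ₁
          (augIdeal_mul_mem_pow_add _ _ hxl (augIdeal_mul_mem_pow_add _ _ hg hδ₂))
      have : m + (1 + (1 + n)) = s + 1 := by omega
      rwa [this] at h1
    have h0 := hf _ hmem
    have hsplit : δ₁ * (x ^ l * g) * δ₂ = δ₁ * ((x ^ l - 1) * (g * δ₂)) + δ₁ * g * δ₂ := by
      noncomm_ring
    rw [hsplit, add_smul, h0, zero_add]
  -- the telescoping sum vanishes
  have hxe : x ^ e = 1 := by rw [hxdef, ← map_pow, hγ, map_one]
  have hsum : (∑ l ∈ Finset.range e, δ₁ * (x ^ l * g) * δ₂) = 0 := by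
    calc (∑ l ∈ Finset.range e, δ₁ * (x ^ l * g) * δ₂)
        = δ₁ * ((∑ l ∈ Finset.range e, x ^ l) * g) * δ₂ := by
          simp only [Finset.sum_mul, Finset.mul_sum, mul_assoc]
      _ = 0 := by rw [geom_sum_mul, hxe, sub_self, mul_zero, zero_mul]
  -- hence e • ((δ₁ * g * δ₂) • f) = 0
  have hesmul : ((e : MonoidAlgebra ℂ G)) • ((δ₁ * g * δ₂) • f) = 0 := by
    have h2 : (∑ l ∈ Finset.range e, (δ₁ * (x ^ l * g) * δ₂) • f) = 0 := by
      rw [← Finset.sum_smul, hsum, zero_smul]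
    rw [Finset.sum_congr rfl (fun l _ => key l)] at h2
    rw [Finset.sum_const, Finset.card_range] at h2
    rw [Nat.cast_smul_eq_nsmul]
    exact h2
  -- divide by e
  have hC : ((e : ℂ) ≠ 0) := Nat.cast_ne_zero.mpr (by omega)
  have h3 := congrArg
    (fun y => (algebraMap ℂ (MonoidAlgebra ℂ G) ((e : ℂ)⁻¹)) • y) hesmul
  simp only [smul_smul, smul_zero] at h3
  rw [← mul_assoc] at h3
  rwa [show (algebraMap ℂ (MonoidAlgebra ℂ G) ((e : ℂ)⁻¹)) * (e : MonoidAlgebra ℂ G) = 1 by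
      rw [← map_natCast (algebraMap ℂ (MonoidAlgebra ℂ G)) e, ← map_mul,
        inv_mul_cancel₀ hC, map_one],
    one_mul] at h3
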